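/- Define the causal relation ≺ on cycles C = {(i, (k+𝟙)/2^i) : i ∈ ℤ, k ∈ ℤ, k ≥ 0} by (i₁,T₁) ≺ (i₂,T₂) iff (i₁ = i₂-1 and T₁ = T₂↙) or (i₁ = i₂ and T₁ = T₂↓) or (i₁ = i₂+1 and T₁ = T₂↘). Then for every cycle (0,T) with T = [k, k+1), k ≥ 1, the past light cone P = {(i,T') ∈ C : (i,T') ≺* (0,T)}, where ≺* is the transitive closure, contains cycles (i,T') for arbitrarily large i; in particular P is infinite. -/

import Mathlib

/-- The causal relation `≺` on cycles `(i, (k+𝟙)/2^i)`, `i ∈ ℤ`, `k ∈ ℕ`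
(represented as pairs `(i, k)`): `(i₁,T₁) ≺ (i₂,T₂)` iff `T₂` has cycle index
`k ≥ 1` and `T₁` is one of `T₂↙ = (⌊(k-1)/2⌋+𝟙)/2^(i₂-1)`,
`T₂↓ = (k-1+𝟙)/2^i₂`, `T₂↘ = (2k-1+𝟙)/2^(i₂+1)`. -/
def cyclePrec (p r : ℤ × ℕ) : Prop :=
  1 ≤ r.2 ∧
    ((p.1 = r.1 - 1 ∧ p.2 = (r.2 - 1) / 2) ∨
     (p.1 = r.1 ∧ p.2 = r.2 - 1) ∨
     (p.1 = r.1 + 1 ∧ p.2 = 2 * r.2 - 1))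

lemma cyclePrec_step (i : ℤ) (m : ℕ) (hm : 1 ≤ m) :
    cyclePrec (i + 1, 2 * m - 1) (i, m) := by
  exact ⟨hm, Or.inr (Or.inr ⟨rfl, rfl⟩)⟩

lemma chain (k : ℕ) (hk : 1 ≤ k) (n : ℕ) :
    Relation.TransGen cyclePrec (((n : ℤ) + 1), 2 ^ (n + 1) * (k - 1) + 1) (0, k) := by
  induction n with
  | zero =>
    apply Relation.TransGen.single
    have : 2 ^ (0 + 1) * (k - 1) + 1 = 2 * k - 1 := by omega
    rw [this]
    simpa using cyclePrec_step 0 k hk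
  | succ n ih =>
    apply Relation.TransGen.head _ ih
    have h1 : (1 : ℕ) ≤ 2 ^ (n + 1) * (k - 1) + 1 := by omega
    have := cyclePrec_step ((n : ℤ) + 1) (2 ^ (n + 1) * (k - 1) + 1) h1
    have heq : 2 * (2 ^ (n + 1) * (k - 1) + 1) - 1 = 2 ^ (n + 1 + 1) * (k - 1) + 1 := by
      ring_nf; omega
    rw [heq] at this
    convert this using 2
    omega

/-- For every cycle `(0, T)` of cell 0 with `T = [k, k+1)`, `k ≥ 1`, the past light
cone `P = {(i,T') : (i,T') ≺* (0,T)}` contains cycles of cells with arbitrarily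
large index; in particular `P` is infinite. -/
theorem ssca_past_light_cone_infinite (k : ℕ) (hk : 1 ≤ k) :
    (∀ N : ℤ, ∃ p : ℤ × ℕ, Relation.TransGen cyclePrec p (0, k) ∧ N < p.1) ∧
    {p : ℤ × ℕ | Relation.TransGen cyclePrec p (0, k)}.Infinite := by
  constructor
  · intro N
    refine ⟨((N.toNat : ℤ) + 1, 2 ^ (N.toNat + 1) * (k - 1) + 1), chain k hk N.toNat, ?_⟩
    have := Int.self_le_toNat N
    omega
  · apply Set.infinite_of_injective_forall_mem
      (f := fun n : ℕ => (((n : ℤ) + 1, 2 ^ (n + 1) * (k - 1) + 1) : ℤ × ℕ))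
    case hi =>
      intro a b hab
      simp only [Prod.mk.injEq] at hab
      omega
    case hf =>
      intro n
      exact chain k hk n
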